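/- arXiv:math/0411475 — 2 statements merged into one kernel-verified Lean document; each statement's English description precedes it below -/
import Mathlib

section
/- Let L = (Lₙ) be a matrix Lipschitz seminorm on a matrix order unit space (V,1). Then the graded set (L_{D_{Lₙ}}¹), where L_{D_{Lₙ}}¹ = {a ∈ Mₙ(V) : L_{D_{Lₙ}}(a) ≤ 1}, is absolutely matrix convex. -/
set_option linter.unusedSectionVars false
set_option maxHeartbeats 1000000


open scoped ENNReal ComplexOrder
open Matrix

noncomputable section

abbrev Mat (n : ℕ) (V : Type*) := Matrix (Fin n) (Fin n) V
abbrev CMat (m n : ℕ) := Matrix (Fin m) (Fin n) ℂ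

/-- The operator norm (ℓ² → ℓ²) of a complex rectangular matrix. -/
def opNorm {I J : Type*} [Fintype I] [Fintype J] [DecidableEq I] [DecidableEq J]
    (M : Matrix I J ℂ) : ℝ :=
  ‖LinearMap.toContinuousLinearMap (Matrix.toEuclideanLin M)‖

variable {V : Type*} [AddCommGroup V] [Module ℂ V] [StarAddMonoid V] [StarModule ℂ V]

/-- `γᴴ a γ` for a scalar matrix `γ` and a matrix `a` over `V`. -/
def conjEntry {m n : ℕ} (γ : CMat m n) (a : Mat m V) : Mat n V :=
  Matrix.of fun i j => ∑ k, ∑ l, (star (γ k i) * γ l j) • a k l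

/-- `α a β` for scalar matrices `α, β` and a matrix `a` over `V`. -/
def cMul {m n : ℕ} (α : CMat n m) (a : Mat m V) (β : CMat m n) : Mat n V :=
  Matrix.of fun i j => ∑ k, ∑ l, (α i k * β l j) • a k l

/-- The direct sum `a ⊕ b` of two square matrices. -/
def dSum {W : Type*} [AddCommGroup W] {m n : ℕ} (a : Matrix (Fin m) (Fin m) W)
    (b : Matrix (Fin n) (Fin n) W) : Matrix (Fin (m + n)) (Fin (m + n)) W :=
  (Matrix.fromBlocks a 0 0 b).submatrix finSumFinEquiv.symm finSumFinEquiv.symm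

/-- The canonical identification of `V` with `M₁(V)`. -/
def toM1 (v : V) : Mat 1 V := Matrix.of fun _ _ => v

/-- The diagonal matrix with diagonal entries `e`. -/
def unitM (e : V) (n : ℕ) : Mat n V := Matrix.of fun i j => if i = j then e else 0

/-- The scalar matrix `[c i j • e]`. -/
def scalMat (e : V) {n : ℕ} (c : CMat n n) : Mat n V := Matrix.of fun i j => c i j • e

/-- `a` is a scalar matrix, i.e. `a ∈ Mₙ(ℂ·e)`. -/
def isScalarMat (e : V) {n : ℕ} (a : Mat n V) : Prop := ∃ c : CMat n n, a = scalMat e c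

/-- The 2×2 block matrix `[[t·1, v], [vᴴ, t·1]]`. -/
def blockSA (e : V) {n : ℕ} (t : ℝ) (v : Mat n V) : Mat (n + n) V :=
  (Matrix.fromBlocks ((t : ℂ) • unitM e n) v vᴴ ((t : ℂ) • unitM e n)).submatrix
    finSumFinEquiv.symm finSumFinEquiv.symm

/-- A matrix order unit space `(V, 1)`: a matrix ordered *-vector space together with a
distinguished order unit such that `V⁺` is a proper cone with order unit `1` and each of the
cones `Mₙ(V)⁺` is Archimedean. -/
structure MOUS (V : Type*) [AddCommGroup V] [Module ℂ V] [StarAddMonoid V]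
    [StarModule ℂ V] where
  unit : V
  star_unit : star unit = unit
  pos : ∀ n, Set (Mat n V)
  zero_mem : ∀ n, (0 : Mat n V) ∈ pos n
  add_mem : ∀ n, ∀ a ∈ pos n, ∀ b ∈ pos n, a + b ∈ pos n
  smul_mem : ∀ n (t : ℝ), 0 ≤ t → ∀ a ∈ pos n, ((t : ℂ) • a) ∈ pos n
  isSelfAdjoint_mem : ∀ n, ∀ a ∈ pos n, aᴴ = a
  conj_mem : ∀ m n (γ : CMat m n), ∀ a ∈ pos m, conjEntry γ a ∈ pos n
  proper : ∀ n, ∀ a ∈ pos n, -a ∈ pos n → a = 0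
  orderUnit : ∀ v : V, star v = v → ∃ t : ℝ, 0 < t ∧ toM1 ((t : ℂ) • unit - v) ∈ pos 1
  arch : ∀ n (a : Mat n V), aᴴ = a →
    (∀ t : ℝ, 0 < t → ((t : ℂ) • unitM unit n + a) ∈ pos n) → a ∈ pos n

/-- The norm on `Mₙ(V)` determined by the matrix order:
`‖v‖ₙ = inf {t : [[t1, v], [v*, t1]] ≥ 0}`. -/
def MOUS.matNorm (S : MOUS V) (n : ℕ) (v : Mat n V) : ℝ :=
  sInf {t : ℝ | blockSA S.unit t v ∈ S.pos (n + n)}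

/-- The matrix pairing `⟪φ, a⟫ = [φ(a_{ij})]`, as a complex matrix indexed by
`Fin r × Fin n`. -/
def pairing {n r : ℕ} (φ : V →ₗ[ℂ] CMat n n) (a : Mat r V) :
    Matrix (Fin r × Fin n) (Fin r × Fin n) ℂ :=
  Matrix.of fun p q => φ (a p.1 q.1) p.2 q.2

/-- The matrix state space: `CSₙ(V)` is the set of unital completely positive maps
`V → Mₙ`. -/
def MOUS.CS (S : MOUS V) (n : ℕ) : Set (V →ₗ[ℂ] CMat n n) :=
  {φ | φ S.unit = 1 ∧ ∀ r, ∀ a ∈ S.pos r, (pairing φ a).PosSemidef}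

/-- A matrix Lipschitz seminorm on a matrix order unit space. -/
structure MatLip (S : MOUS V) where
  L : ∀ n, Mat n V → ℝ
  nonneg : ∀ n a, 0 ≤ L n a
  add_le : ∀ n (a b : Mat n V), L n (a + b) ≤ L n a + L n b
  smul_eq : ∀ n (c : ℂ) (a : Mat n V), L n (c • a) = ‖c‖ * L n a
  null : ∀ n (a : Mat n V), L n a = 0 ↔ isScalarMat S.unit a
  dSum_eq : ∀ m n (v : Mat m V) (w : Mat n V), L (m + n) (dSum v w) = max (L m v) (L n w)
  cMul_le : ∀ m n (α : CMat n m) (v : Mat m V) (β : CMat m n),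
    L n (cMul α v β) ≤ opNorm α * L m v * opNorm β
  star_eq : ∀ n (v : Mat n V), L n vᴴ = L n v

/-- The metric `D_{Lₙ}` on the matrix state space `CSₙ(V)` (with values in `[0,∞]`). -/
def Dl (S : MOUS V) (Lp : MatLip S) {n : ℕ} (φ ψ : V →ₗ[ℂ] CMat n n) : ℝ≥0∞ :=
  ⨆ (r : ℕ) (a : Mat r V) (_ : Lp.L r a ≤ 1),
    ENNReal.ofReal (opNorm (pairing φ a - pairing ψ a))

/-- The gauge `L_{D_{Lₙ}}` recovered from the matrix metric `D_L`. -/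
def LDl (S : MOUS V) (Lp : MatLip S) (n : ℕ) (a : Mat n V) : ℝ≥0∞ :=
  ⨆ (r : ℕ) (φ : V →ₗ[ℂ] CMat r r) (_ : φ ∈ S.CS r) (ψ : V →ₗ[ℂ] CMat r r)
    (_ : ψ ∈ S.CS r) (_ : φ ≠ ψ),
    ENNReal.ofReal (opNorm (pairing φ a - pairing ψ a)) / Dl S Lp φ ψ

/-! ### Auxiliary lemmas for the proof -/

open scoped Matrix.Norms.L2Operator in
lemma opNorm_mul_le' {I J K : Type*} [Fintype I] [Fintype J] [Fintype K]
    [DecidableEq I] [DecidableEq J] [DecidableEq K]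
    (A : Matrix I J ℂ) (B : Matrix J K ℂ) :
    opNorm (A * B) ≤ opNorm A * opNorm B :=
  Matrix.l2_opNorm_mul A B

section opNormLemmas

variable {I J K L I' J' : Type*} [Fintype I] [Fintype J] [Fintype K] [Fintype L]
  [Fintype I'] [Fintype J'] [DecidableEq I] [DecidableEq J] [DecidableEq K]
  [DecidableEq L] [DecidableEq I'] [DecidableEq J']

lemma toEuclideanLin_apply' (M : Matrix I J ℂ) (x : EuclideanSpace ℂ J) (i : I) :
    Matrix.toEuclideanLin M x i = ∑ j, M i j * x j := rfl

lemma opNorm_nonneg' (M : Matrix I J ℂ) : 0 ≤ opNorm M := norm_nonneg _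

lemma opNorm_le_of (M : Matrix I J ℂ) {C : ℝ} (hC : 0 ≤ C)
    (h : ∀ x : EuclideanSpace ℂ J, ‖Matrix.toEuclideanLin M x‖ ≤ C * ‖x‖) : opNorm M ≤ C :=
  ContinuousLinearMap.opNorm_le_bound _ hC h

lemma le_opNorm' (M : Matrix I J ℂ) (x : EuclideanSpace ℂ J) :
    ‖Matrix.toEuclideanLin M x‖ ≤ opNorm M * ‖x‖ :=
  (LinearMap.toContinuousLinearMap (Matrix.toEuclideanLin M)).le_opNorm x

lemma norm_comp_equiv (e : I ≃ I') (x : EuclideanSpace ℂ I') :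
    ‖(show EuclideanSpace ℂ I from WithLp.toLp 2 fun i => x (e i))‖ = ‖x‖ := by
  simp only [EuclideanSpace.norm_eq]
  congr 1
  exact Equiv.sum_comp e fun i' => ‖x i'‖ ^ 2

lemma opNorm_submatrix_le (M : Matrix I' J' ℂ) (e : I ≃ I') (f : J ≃ J') :
    opNorm (M.submatrix e f) ≤ opNorm M := by
  refine opNorm_le_of _ (opNorm_nonneg' M) fun x => ?_
  set y : EuclideanSpace ℂ J' := WithLp.toLp 2 (fun j' => x (f.symm j')) with hy
  have hxy : ‖y‖ = ‖x‖ := by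
    have := norm_comp_equiv f.symm x
    simpa using this
  have key : Matrix.toEuclideanLin (M.submatrix e f) x
      = (show EuclideanSpace ℂ I from WithLp.toLp 2 fun i => Matrix.toEuclideanLin M y (e i)) := by
    ext i
    show (∑ j, M.submatrix e f i j * x j) = ∑ j', M (e i) j' * y j'
    rw [show (∑ j', M (e i) j' * y j') = ∑ j, M (e i) (f j) * y (f j) from
      (Equiv.sum_comp f fun j' => M (e i) j' * y j').symm]
    simp only [hy, Matrix.submatrix_apply]
    refine Finset.sum_congr rfl fun j _ => ?_
    congr 1
    exact congrArg x (f.symm_apply_apply j).symm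
  rw [key, norm_comp_equiv e, ← hxy]
  exact le_opNorm' M y

lemma opNorm_submatrix_equiv (M : Matrix I' J' ℂ) (e : I ≃ I') (f : J ≃ J') :
    opNorm (M.submatrix e f) = opNorm M := by
  refine le_antisymm (opNorm_submatrix_le M e f) ?_
  have := opNorm_submatrix_le (M.submatrix e f) e.symm f.symm
  simpa [Matrix.submatrix_submatrix, Function.comp] using this

lemma euclid_norm_sq {ι : Type*} [Fintype ι] (z : EuclideanSpace ℂ ι) :
    ‖z‖ ^ 2 = ∑ i, ‖z i‖ ^ 2 := by
  rw [EuclideanSpace.norm_eq, Real.sq_sqrt (by positivity)]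

lemma opNorm_fromBlocks_le (A : Matrix I J ℂ) (B : Matrix K L ℂ) :
    opNorm (Matrix.fromBlocks A 0 0 B) ≤ max (opNorm A) (opNorm B) := by
  refine opNorm_le_of _ (le_max_of_le_left (opNorm_nonneg' A)) fun x => ?_
  set C := max (opNorm A) (opNorm B) with hC
  set x₁ : EuclideanSpace ℂ J := WithLp.toLp 2 (fun j => x (Sum.inl j)) with hx₁
  set x₂ : EuclideanSpace ℂ L := WithLp.toLp 2 (fun l => x (Sum.inr l)) with hx₂
  have hx : ‖x‖ ^ 2 = ‖x₁‖ ^ 2 + ‖x₂‖ ^ 2 := by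
    rw [euclid_norm_sq, euclid_norm_sq, euclid_norm_sq, Fintype.sum_sum_type]
  have hz : ‖Matrix.toEuclideanLin (Matrix.fromBlocks A 0 0 B) x‖ ^ 2
      = ‖Matrix.toEuclideanLin A x₁‖ ^ 2 + ‖Matrix.toEuclideanLin B x₂‖ ^ 2 := by
    rw [euclid_norm_sq, euclid_norm_sq, euclid_norm_sq, Fintype.sum_sum_type]
    congr 1
    · refine Finset.sum_congr rfl fun i _ => ?_
      congr 1
      rw [toEuclideanLin_apply', toEuclideanLin_apply', Fintype.sum_sum_type]
      simp [hx₁]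
    · refine Finset.sum_congr rfl fun k _ => ?_
      congr 1
      rw [toEuclideanLin_apply', toEuclideanLin_apply', Fintype.sum_sum_type]
      simp [hx₂]
  have h1 : ‖Matrix.toEuclideanLin A x₁‖ ≤ C * ‖x₁‖ :=
    le_trans (le_opNorm' A x₁) (by gcongr; exact le_max_left _ _)
  have h2 : ‖Matrix.toEuclideanLin B x₂‖ ≤ C * ‖x₂‖ :=
    le_trans (le_opNorm' B x₂) (by gcongr; exact le_max_right _ _)
  have hC0 : 0 ≤ C := le_max_of_le_left (opNorm_nonneg' A)
  calc ‖Matrix.toEuclideanLin (Matrix.fromBlocks A 0 0 B) x‖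
      = Real.sqrt (‖Matrix.toEuclideanLin (Matrix.fromBlocks A 0 0 B) x‖ ^ 2) :=
        (Real.sqrt_sq (norm_nonneg _)).symm
    _ ≤ Real.sqrt ((C * ‖x‖) ^ 2) := by
        refine Real.sqrt_le_sqrt ?_
        have e1 : ‖Matrix.toEuclideanLin A x₁‖ ^ 2 ≤ C ^ 2 * ‖x₁‖ ^ 2 := by
          rw [← mul_pow]; exact pow_le_pow_left₀ (norm_nonneg _) h1 2
        have e2 : ‖Matrix.toEuclideanLin B x₂‖ ^ 2 ≤ C ^ 2 * ‖x₂‖ ^ 2 := by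
          rw [← mul_pow]; exact pow_le_pow_left₀ (norm_nonneg _) h2 2
        rw [hz, mul_pow, hx]
        nlinarith [e1, e2]
    _ = C * ‖x‖ := Real.sqrt_sq (mul_nonneg hC0 (norm_nonneg x))

/-- The ampliation `α ⊗ 1` of a scalar matrix. -/
def ampl (α : Matrix I J ℂ) (K : Type*) [Fintype K] [DecidableEq K] :
    Matrix (I × K) (J × K) ℂ :=
  Matrix.of fun p q => if p.2 = q.2 then α p.1 q.1 else 0

lemma opNorm_ampl_le (α : Matrix I J ℂ) :
    opNorm (ampl α K) ≤ opNorm α := by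
  refine opNorm_le_of _ (opNorm_nonneg' α) fun x => ?_
  set xs : K → EuclideanSpace ℂ J := fun s => WithLp.toLp 2 (fun j => x (j, s)) with hxs
  have hx : ‖x‖ ^ 2 = ∑ s, ‖xs s‖ ^ 2 := by
    rw [euclid_norm_sq, Fintype.sum_prod_type, Finset.sum_comm]
    refine Finset.sum_congr rfl fun s _ => ?_
    rw [euclid_norm_sq]
  have hz : ‖Matrix.toEuclideanLin (ampl α K) x‖ ^ 2
      = ∑ s, ‖Matrix.toEuclideanLin α (xs s)‖ ^ 2 := by
    rw [euclid_norm_sq, Fintype.sum_prod_type, Finset.sum_comm]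
    refine Finset.sum_congr rfl fun s _ => ?_
    rw [euclid_norm_sq]
    refine Finset.sum_congr rfl fun i _ => ?_
    congr 1
    rw [toEuclideanLin_apply', toEuclideanLin_apply', Fintype.sum_prod_type]
    simp only [ampl, Matrix.of_apply, ite_mul, zero_mul]
    rw [Finset.sum_comm]
    rw [Finset.sum_eq_single s (by intro t _ ht; simp [Ne.symm ht]) (by simp)]
    simp [hxs]
  calc ‖Matrix.toEuclideanLin (ampl α K) x‖
      = Real.sqrt (‖Matrix.toEuclideanLin (ampl α K) x‖ ^ 2) :=
        (Real.sqrt_sq (norm_nonneg _)).symm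
    _ ≤ Real.sqrt ((opNorm α * ‖x‖) ^ 2) := by
        refine Real.sqrt_le_sqrt ?_
        rw [hz, mul_pow, hx, Finset.mul_sum]
        refine Finset.sum_le_sum fun s _ => ?_
        rw [← mul_pow]
        exact pow_le_pow_left₀ (norm_nonneg _) (le_opNorm' α (xs s)) 2
    _ = opNorm α * ‖x‖ := Real.sqrt_sq (mul_nonneg (opNorm_nonneg' α) (norm_nonneg x))

end opNormLemmas

/-- The index equivalence used to identify `pairing` of a direct sum with a block matrix. -/
def dGequiv (m n r : ℕ) : Fin (m + n) × Fin r ≃ (Fin m × Fin r) ⊕ (Fin n × Fin r) :=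
  (finSumFinEquiv.symm.prodCongr (Equiv.refl (Fin r))).trans (Equiv.sumProdDistrib _ _ _)

lemma pairing_sub_dSum {m n r : ℕ} (φ ψ : V →ₗ[ℂ] CMat r r) (v : Mat m V) (w : Mat n V) :
    pairing φ (dSum v w) - pairing ψ (dSum v w)
      = (Matrix.fromBlocks (pairing φ v - pairing ψ v) 0 0
          (pairing φ w - pairing ψ w)).submatrix (dGequiv m n r) (dGequiv m n r) := by
  ext ⟨i, s⟩ ⟨j, t⟩
  simp only [Matrix.sub_apply, pairing, Matrix.of_apply, dSum, Matrix.submatrix_apply,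
    dGequiv, Equiv.trans_apply, Equiv.prodCongr_apply, Equiv.coe_refl, Prod.map]
  rcases hi : finSumFinEquiv.symm i with a | a <;> rcases hj : finSumFinEquiv.symm j with b | b <;>
    simp [hi, hj, Equiv.sumProdDistrib, map_zero]

lemma pairing_cMul {m n r : ℕ} (φ : V →ₗ[ℂ] CMat r r) (α : CMat n m) (v : Mat m V)
    (β : CMat m n) :
    pairing φ (cMul α v β) = ampl α (Fin r) * pairing φ v * ampl β (Fin r) := by
  ext ⟨i, s⟩ ⟨j, u⟩
  simp only [pairing, Matrix.of_apply, cMul, map_sum, LinearMap.map_smul, Matrix.mul_apply,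
    Matrix.sum_apply, Matrix.smul_apply, smul_eq_mul, ampl, Fintype.sum_prod_type,
    ite_mul, mul_ite, zero_mul, mul_zero, Finset.sum_ite_eq, Finset.sum_ite_eq',
    Finset.mem_univ, if_true]
  rw [Finset.sum_comm]
  simp only [Finset.sum_mul]
  exact Finset.sum_congr rfl fun l _ => Finset.sum_congr rfl fun k _ => by ring

lemma pairing_sub_cMul {m n r : ℕ} (φ ψ : V →ₗ[ℂ] CMat r r) (α : CMat n m) (v : Mat m V)
    (β : CMat m n) :
    pairing φ (cMul α v β) - pairing ψ (cMul α v β)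
      = ampl α (Fin r) * (pairing φ v - pairing ψ v) * ampl β (Fin r) := by
  rw [pairing_cMul, pairing_cMul, Matrix.mul_sub, Matrix.sub_mul]

lemma le_LDl (S : MOUS V) (Lp : MatLip S) {n r : ℕ} (a : Mat n V)
    {φ ψ : V →ₗ[ℂ] CMat r r} (hφ : φ ∈ S.CS r) (hψ : ψ ∈ S.CS r) (hne : φ ≠ ψ) :
    ENNReal.ofReal (opNorm (pairing φ a - pairing ψ a)) / Dl S Lp φ ψ ≤ LDl S Lp n a :=
  le_iSup_of_le r <| le_iSup_of_le φ <| le_iSup_of_le hφ <| le_iSup_of_le ψ <|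
    le_iSup_of_le hψ <| le_iSup_of_le hne le_rfl

/-- the graded set of unit balls `(L_{D_{Lₙ}}¹)` is absolutely matrix convex. -/
theorem LDl_unitBall_absolutelyMatrixConvex (S : MOUS V) (Lp : MatLip S) :
    (∀ m n (v : Mat m V) (w : Mat n V),
      LDl S Lp m v ≤ 1 → LDl S Lp n w ≤ 1 → LDl S Lp (m + n) (dSum v w) ≤ 1) ∧
    (∀ m n (α : CMat n m) (v : Mat m V) (β : CMat m n), opNorm α ≤ 1 → opNorm β ≤ 1 →
      LDl S Lp m v ≤ 1 → LDl S Lp n (cMul α v β) ≤ 1) := by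
  constructor
  · intro m n v w hv hw
    refine iSup_le fun r => iSup_le fun φ => iSup_le fun hφ => iSup_le fun ψ =>
      iSup_le fun hψ => iSup_le fun hne => ?_
    have hA := le_trans (le_LDl S Lp v hφ hψ hne) hv
    have hB := le_trans (le_LDl S Lp w hφ hψ hne) hw
    have hkey : opNorm (pairing φ (dSum v w) - pairing ψ (dSum v w))
        ≤ max (opNorm (pairing φ v - pairing ψ v)) (opNorm (pairing φ w - pairing ψ w)) := by
      rw [pairing_sub_dSum, opNorm_submatrix_equiv]
      exact opNorm_fromBlocks_le _ _
    rcases le_total (opNorm (pairing φ v - pairing ψ v))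
        (opNorm (pairing φ w - pairing ψ w)) with h | h
    · have h2 : opNorm (pairing φ (dSum v w) - pairing ψ (dSum v w))
          ≤ opNorm (pairing φ w - pairing ψ w) := hkey.trans (max_le h le_rfl)
      exact le_trans (ENNReal.div_le_div_right (ENNReal.ofReal_le_ofReal h2) _) hB
    · have h2 : opNorm (pairing φ (dSum v w) - pairing ψ (dSum v w))
          ≤ opNorm (pairing φ v - pairing ψ v) := hkey.trans (max_le le_rfl h)
      exact le_trans (ENNReal.div_le_div_right (ENNReal.ofReal_le_ofReal h2) _) hA
  · intro m n α v β hα hβ hv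
    refine iSup_le fun r => iSup_le fun φ => iSup_le fun hφ => iSup_le fun ψ =>
      iSup_le fun hψ => iSup_le fun hne => ?_
    have hA := le_trans (le_LDl S Lp v hφ hψ hne) hv
    have hkey : opNorm (pairing φ (cMul α v β) - pairing ψ (cMul α v β))
        ≤ opNorm (pairing φ v - pairing ψ v) := by
      rw [pairing_sub_cMul]
      set D := pairing φ v - pairing ψ v with hD
      have h1 : opNorm (ampl α (Fin r)) ≤ 1 := (opNorm_ampl_le α).trans hα
      have h2 : opNorm (ampl β (Fin r)) ≤ 1 := (opNorm_ampl_le β).trans hβ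
      calc opNorm (ampl α (Fin r) * D * ampl β (Fin r))
          ≤ opNorm (ampl α (Fin r) * D) * opNorm (ampl β (Fin r)) := opNorm_mul_le' _ _
        _ ≤ opNorm (ampl α (Fin r)) * opNorm D * opNorm (ampl β (Fin r)) :=
            mul_le_mul_of_nonneg_right (opNorm_mul_le' _ _) (opNorm_nonneg' _)
        _ ≤ 1 * opNorm D * 1 := by
            have hd := opNorm_nonneg' D
            have hb := opNorm_nonneg' (ampl β (Fin r))
            exact mul_le_mul (mul_le_mul_of_nonneg_right h1 hd) h2 hb (by linarith)
        _ = opNorm D := by ring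
    exact le_trans (ENNReal.div_le_div_right (ENNReal.ofReal_le_ofReal hkey) _) hA
end
end

section
/- Let L = (Lₙ) be any matrix Lipschitz seminorm on a matrix order unit space (V,1). Then each L_{D_{Lₙ}} is lower semicontinuous: if a net (a_i) in Mₙ(V) converges weakly to a ∈ Mₙ(V) (i.e., with respect to the matrix pairing with M_r(V*)), then L_{D_{Lₙ}}(a) ≤ liminf_i L_{D_{Lₙ}}(a_i). -/
open scoped ENNReal ComplexOrder
open Matrix

noncomputable section

variable {V : Type*} [AddCommGroup V] [Module ℂ V] [StarAddMonoid V] [StarModule ℂ V]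

/-- A bounded linear functional on `V`, i.e. an element of `V*`. -/
def Bounded1 (S : MOUS V) (f : V →ₗ[ℂ] ℂ) : Prop :=
  ∃ C : ℝ, ∀ v : V, ‖f v‖ ≤ C * S.matNorm 1 (toM1 v)

-- continuity of opNorm
lemma continuous_opNorm {I : Type*} [Fintype I] [DecidableEq I] :
    Continuous (opNorm : Matrix I I ℂ → ℝ) := by
  let f : Matrix I I ℂ →ₗ[ℂ] (EuclideanSpace ℂ I →L[ℂ] EuclideanSpace ℂ I) :=
    (LinearMap.toContinuousLinearMap.toLinearMap).comp Matrix.toEuclideanLin.toLinearMap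
  have hf : Continuous f := f.continuous_of_finiteDimensional
  exact continuous_norm.comp hf

-- PSD 2-entry bound
lemma psd_pair {ι : Type*} [Fintype ι] [DecidableEq ι] {M : Matrix ι ι ℂ}
    (hM : M.PosSemidef) {x y : ι} (hxy : x ≠ y) {t : ℝ}
    (hxx : M x x = (t : ℂ)) (hyy : M y y = (t : ℂ)) : ‖M x y‖ ≤ t := by
  have ht0 : 0 ≤ t := by
    have h := hM.dotProduct_mulVec_nonneg (Pi.single x 1)
    rw [Matrix.mulVec_single, ← Pi.single_star, star_one] at h
    rw [single_dotProduct] at h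
    simp only [Pi.smul_apply, op_smul_eq_mul, Matrix.col_apply, one_mul, mul_one] at h
    rw [hxx] at h
    exact Complex.zero_le_real.mp h
  set z := M x y with hz
  by_cases hz0 : z = 0
  · simp [hz0, ht0]
  have hherm : M y x = (starRingEnd ℂ) z := by
    have := hM.1
    rw [Matrix.IsHermitian] at this
    have := congrFun (congrFun this y) x
    simpa [Matrix.conjTranspose_apply] using this.symm
  set c : ℂ := -((starRingEnd ℂ) z) / (‖z‖ : ℂ) with hc
  have hnz : (‖z‖ : ℂ) ≠ 0 := by
    simpa using norm_ne_zero_iff.mpr hz0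
  have hzz : z * (starRingEnd ℂ) z = (‖z‖ : ℂ) * (‖z‖ : ℂ) := by
    rw [Complex.mul_conj, Complex.normSq_eq_norm_sq]
    push_cast
    ring
  have hzc : z * c = -(‖z‖ : ℂ) := by
    rw [hc, mul_div_assoc', mul_neg, hzz, neg_div, mul_div_assoc, div_self hnz, mul_one]
  have hcs : (starRingEnd ℂ) c = -z / (‖z‖ : ℂ) := by
    rw [hc]
    simp [map_div₀]
  have hcz : (starRingEnd ℂ) c * (starRingEnd ℂ) z = -(‖z‖ : ℂ) := by
    rw [hcs, div_mul_eq_mul_div, neg_mul, hzz, neg_div, mul_div_assoc, div_self hnz, mul_one]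
  have hcc : (starRingEnd ℂ) c * c = 1 := by
    rw [hcs, hc, div_mul_div_comm, neg_mul_neg, hzz, div_self (mul_ne_zero hnz hnz)]
  have key := hM.dotProduct_mulVec_nonneg (Pi.single x 1 + Pi.single y c)
  have hexp : (star (Pi.single x (1:ℂ) + Pi.single y c)) ⬝ᵥ
      (M *ᵥ (Pi.single x (1:ℂ) + Pi.single y c))
      = M x x + M x y * c + (starRingEnd ℂ) c * M y x + (starRingEnd ℂ) c * c * M y y := by
    rw [star_add, ← Pi.single_star, ← Pi.single_star, star_one]
    rw [Matrix.mulVec_add, Matrix.mulVec_single, Matrix.mulVec_single]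
    rw [add_dotProduct, single_dotProduct, single_dotProduct]
    simp only [Pi.smul_apply, op_smul_eq_mul, Matrix.col_apply, Pi.add_apply, Pi.single_apply, if_neg hxy, if_neg (Ne.symm hxy),
      eq_self_iff_true, if_true, Complex.star_def]
    ring
  rw [hexp] at key
  rw [hxx, hyy, ← hz, hherm, hzc, hcz, hcc] at key
  have : (0:ℂ) ≤ ((t - ‖z‖ - ‖z‖ + t : ℝ) : ℂ) := by
    convert key using 1
    push_cast
    ring
  have := Complex.zero_le_real.mp this
  linarith


section MainAux

variable {V : Type*} [AddCommGroup V] [Module ℂ V] [StarAddMonoid V] [StarModule ℂ V]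

/-- The entry functional `v ↦ φ(v) p q`. -/
def entryFun {r : ℕ} (φ : V →ₗ[ℂ] CMat r r) (p q : Fin r) : V →ₗ[ℂ] ℂ where
  toFun v := φ v p q
  map_add' x y := by simp [Matrix.add_apply]
  map_smul' c x := by simp [Matrix.smul_apply]

lemma finSumFinEquiv_symm_zero' : finSumFinEquiv.symm (0 : Fin (1+1)) = Sum.inl 0 := by decide

lemma finSumFinEquiv_symm_one' : finSumFinEquiv.symm (1 : Fin (1+1)) = Sum.inr 0 := by decide

lemma blockSA1_00 (e : V) (t : ℝ) (v : Mat 1 V) :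
    blockSA e t v 0 0 = (t : ℂ) • e := by
  simp [blockSA, finSumFinEquiv_symm_zero', unitM]

lemma blockSA1_01 (e : V) (t : ℝ) (v : Mat 1 V) :
    blockSA e t v 0 1 = v 0 0 := by
  simp [blockSA, finSumFinEquiv_symm_zero', finSumFinEquiv_symm_one']

lemma blockSA1_10 (e : V) (t : ℝ) (v : Mat 1 V) :
    blockSA e t v 1 0 = star (v 0 0) := by
  simp [blockSA, finSumFinEquiv_symm_zero', finSumFinEquiv_symm_one',
    Matrix.conjTranspose_apply]

lemma blockSA1_11 (e : V) (t : ℝ) (v : Mat 1 V) :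
    blockSA e t v 1 1 = (t : ℂ) • e := by
  simp [blockSA, finSumFinEquiv_symm_one', unitM]

lemma toM1_unit_pos (S : MOUS V) : toM1 S.unit ∈ S.pos 1 := by
  obtain ⟨t, ht, hp⟩ := S.orderUnit (-S.unit) (by simp [S.star_unit])
  have h2 : toM1 ((t : ℂ) • S.unit - -S.unit) = ((t + 1 : ℝ) : ℂ) • toM1 S.unit := by
    ext i j
    show (t : ℂ) • S.unit - -S.unit = ((t + 1 : ℝ) : ℂ) • S.unit
    push_cast
    module
  rw [h2] at hp
  have h3 := S.smul_mem 1 ((t + 1)⁻¹) (by positivity) _ hp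
  have h4 : (((t + 1)⁻¹ : ℝ) : ℂ) • (((t + 1 : ℝ) : ℂ) • toM1 S.unit) = toM1 S.unit := by
    rw [smul_smul, ← Complex.ofReal_mul, inv_mul_cancel₀ (by positivity), Complex.ofReal_one,
      one_smul]
  rwa [h4] at h3

lemma smul_toM1 (c : ℂ) (v : V) : c • toM1 v = toM1 (c • v) := by
  ext i j; rfl

lemma blockSA1_eq (e : V) (t : ℝ) (w : Mat 1 V) :
    blockSA e t w = Matrix.of ![![(t : ℂ) • e, w 0 0], ![star (w 0 0), (t : ℂ) • e]] := by
  ext i j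
  fin_cases i <;> fin_cases j
  · exact blockSA1_00 e t w
  · exact blockSA1_01 e t w
  · exact blockSA1_10 e t w
  · exact blockSA1_11 e t w

lemma blockSA_nonempty (S : MOUS V) (v : V) :
    ∃ t : ℝ, blockSA S.unit t (toM1 v) ∈ S.pos (1 + 1) := by
  set u := S.unit with hu
  set h : V := (1/2 : ℂ) • v + (1/2 : ℂ) • star v with hh
  set k : V := (-(Complex.I)/2) • v + (Complex.I/2) • star v with hk
  have hsh : star h = h := by
    simp only [hh, star_add, star_smul, star_star, Complex.star_def, map_div₀, _root_.map_one,
      map_ofNat, map_neg, Complex.conj_I]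
    module
  have hsk : star k = k := by
    simp only [hk, star_add, star_smul, star_star, Complex.star_def, map_div₀, _root_.map_one,
      map_ofNat, map_neg, Complex.conj_I]
    module
  have c1 : Complex.I * (-Complex.I / 2) = 1 / 2 := by
    rw [mul_div_assoc', mul_neg, Complex.I_mul_I, neg_neg]
  have c2 : Complex.I * (Complex.I / 2) = -(1 / 2) := by
    rw [mul_div_assoc', Complex.I_mul_I]
    norm_num
  have hv : v = h + Complex.I • k := by
    rw [hh, hk, smul_add, smul_smul, smul_smul, c1, c2]
    module
  have hsv : star v = h - Complex.I • k := by
    rw [hh, hk, smul_add, smul_smul, smul_smul, c1, c2]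
    module
  obtain ⟨t₁, ht₁, hp₁⟩ := S.orderUnit h hsh
  obtain ⟨t₂, ht₂, hp₂⟩ := S.orderUnit (-h) (by rw [star_neg, hsh])
  obtain ⟨s₁, hs₁, hq₁⟩ := S.orderUnit k hsk
  obtain ⟨s₂, hs₂, hq₂⟩ := S.orderUnit (-k) (by rw [star_neg, hsk])
  set c : ℝ := t₁ + t₂ with hc
  set d : ℝ := s₁ + s₂ with hd
  have hcp : toM1 ((c : ℂ) • u + h) ∈ S.pos 1 := by
    have e1 : toM1 ((c : ℂ) • u + h) =
        toM1 ((t₂ : ℂ) • u - -h) + ((t₁ : ℝ) : ℂ) • toM1 u := by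
      ext i j
      show (c : ℂ) • u + h = ((t₂ : ℂ) • u - -h) + ((t₁ : ℝ) : ℂ) • u
      rw [hc]; push_cast; module
    rw [e1]
    exact S.add_mem 1 _ hp₂ _ (S.smul_mem 1 t₁ ht₁.le _ (toM1_unit_pos S))
  have hcm : toM1 ((c : ℂ) • u - h) ∈ S.pos 1 := by
    have e1 : toM1 ((c : ℂ) • u - h) =
        toM1 ((t₁ : ℂ) • u - h) + ((t₂ : ℝ) : ℂ) • toM1 u := by
      ext i j
      show (c : ℂ) • u - h = ((t₁ : ℂ) • u - h) + ((t₂ : ℝ) : ℂ) • u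
      rw [hc]; push_cast; module
    rw [e1]
    exact S.add_mem 1 _ hp₁ _ (S.smul_mem 1 t₂ ht₂.le _ (toM1_unit_pos S))
  have hdp : toM1 ((d : ℂ) • u + k) ∈ S.pos 1 := by
    have e1 : toM1 ((d : ℂ) • u + k) =
        toM1 ((s₂ : ℂ) • u - -k) + ((s₁ : ℝ) : ℂ) • toM1 u := by
      ext i j
      show (d : ℂ) • u + k = ((s₂ : ℂ) • u - -k) + ((s₁ : ℝ) : ℂ) • u
      rw [hd]; push_cast; module
    rw [e1]
    exact S.add_mem 1 _ hq₂ _ (S.smul_mem 1 s₁ hs₁.le _ (toM1_unit_pos S))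
  have hdm : toM1 ((d : ℂ) • u - k) ∈ S.pos 1 := by
    have e1 : toM1 ((d : ℂ) • u - k) =
        toM1 ((s₁ : ℂ) • u - k) + ((s₂ : ℝ) : ℂ) • toM1 u := by
      ext i j
      show (d : ℂ) • u - k = ((s₁ : ℂ) • u - k) + ((s₂ : ℝ) : ℂ) • u
      rw [hd]; push_cast; module
    rw [e1]
    exact S.add_mem 1 _ hq₁ _ (S.smul_mem 1 s₂ hs₂.le _ (toM1_unit_pos S))
  refine ⟨c + d, ?_⟩
  have X1 := S.conj_mem 1 (1+1) !![1, 1] _ hcp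
  have X2 := S.conj_mem 1 (1+1) !![1, -1] _ hcm
  have X3 := S.conj_mem 1 (1+1) !![1, Complex.I] _ hdp
  have X4 := S.conj_mem 1 (1+1) !![1, -Complex.I] _ hdm
  have hsum := S.add_mem (1+1) _ (S.add_mem (1+1) _ (S.add_mem (1+1) _ X1 _ X2) _ X3) _ X4
  have hfin := S.smul_mem (1+1) (1/2) (by norm_num) _ hsum
  have heq : ((1/2 : ℝ) : ℂ) •
      (conjEntry !![1, 1] (toM1 ((c : ℂ) • u + h)) +
        conjEntry !![1, -1] (toM1 ((c : ℂ) • u - h)) +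
        conjEntry !![1, Complex.I] (toM1 ((d : ℂ) • u + k)) +
        conjEntry !![1, -Complex.I] (toM1 ((d : ℂ) • u - k)))
      = blockSA S.unit (c + d) (toM1 v) := by
    rw [blockSA1_eq]
    ext i j
    fin_cases i <;> fin_cases j <;>
      simp only [Matrix.smul_apply, Matrix.add_apply, conjEntry, Matrix.of_apply,
        Fin.sum_univ_one, toM1, Matrix.cons_val', Matrix.cons_val_zero, Matrix.cons_val_one,
        Matrix.head_cons, Matrix.empty_val', Matrix.cons_val_fin_one, Matrix.head_fin_const,
        Complex.star_def, _root_.map_one, map_neg, Complex.conj_I, one_mul, mul_one, neg_mul,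
        mul_neg, Complex.I_mul_I, neg_neg, star_one, Fin.zero_eta, Fin.mk_one, Fin.isValue]
    · rw [← hu]; push_cast; module
    · rw [hv]; push_cast; module
    · rw [hsv]; push_cast; module
    · rw [← hu]; push_cast; module
  rw [← heq]
  exact hfin

lemma entry_bound (S : MOUS V) {r : ℕ} {φ : V →ₗ[ℂ] CMat r r} (hφ : φ ∈ S.CS r)
    (v : V) (p q : Fin r) {t : ℝ} (ht : blockSA S.unit t (toM1 v) ∈ S.pos (1 + 1)) :
    ‖φ v p q‖ ≤ t := by
  have hM : (pairing φ (blockSA S.unit t (toM1 v))).PosSemidef := hφ.2 (1 + 1) _ ht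
  have h00 : pairing φ (blockSA S.unit t (toM1 v)) ((0 : Fin (1+1)), p) ((0 : Fin (1+1)), p)
      = (t : ℂ) := by
    show φ (blockSA S.unit t (toM1 v) 0 0) p p = (t : ℂ)
    rw [blockSA1_00, _root_.map_smul, Matrix.smul_apply, hφ.1, Matrix.one_apply_eq, smul_eq_mul,
      mul_one]
  have h11 : pairing φ (blockSA S.unit t (toM1 v)) ((1 : Fin (1+1)), q) ((1 : Fin (1+1)), q)
      = (t : ℂ) := by
    show φ (blockSA S.unit t (toM1 v) 1 1) q q = (t : ℂ)
    rw [blockSA1_11, _root_.map_smul, Matrix.smul_apply, hφ.1, Matrix.one_apply_eq, smul_eq_mul,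
      mul_one]
  have h01 : pairing φ (blockSA S.unit t (toM1 v)) ((0 : Fin (1+1)), p) ((1 : Fin (1+1)), q)
      = φ v p q := by
    show φ (blockSA S.unit t (toM1 v) 0 1) p q = φ v p q
    rw [blockSA1_01]
    rfl
  have hne : ((0 : Fin (1+1)), p) ≠ ((1 : Fin (1+1)), q) := by
    intro hcon
    have h2 : (0 : Fin (1+1)) = 1 := congrArg Prod.fst hcon
    exact absurd h2 (by decide)
  have := psd_pair hM hne h00 h11
  rwa [h01] at this

lemma bounded_entryFun (S : MOUS V) {r : ℕ} {φ : V →ₗ[ℂ] CMat r r} (hφ : φ ∈ S.CS r)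
    (p q : Fin r) : Bounded1 S (entryFun φ p q) := by
  refine ⟨1, fun v => ?_⟩
  rw [one_mul, MOUS.matNorm]
  obtain ⟨t0, ht0⟩ := blockSA_nonempty S v
  exact le_csInf ⟨t0, ht0⟩ fun t ht => entry_bound S hφ v p q ht

end MainAux

/-- each `L_{D_{Lₙ}}` is lower semicontinuous for the weak topology: if a net
`(a_i)` in `Mₙ(V)` converges weakly (w.r.t. the pairing with `V*`) to `a`, then
`L_{D_{Lₙ}}(a) ≤ liminf_i L_{D_{Lₙ}}(a_i)`. -/
theorem LDl_weakly_lowerSemicontinuous (S : MOUS V) (Lp : MatLip S) (n : ℕ)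
    {ι : Type*} (F : Filter ι) [F.NeBot] (a_ : ι → Mat n V) (a : Mat n V)
    (hconv : ∀ f : V →ₗ[ℂ] ℂ, Bounded1 S f → ∀ i j,
      Filter.Tendsto (fun k => f (a_ k i j)) F (nhds (f (a i j)))) :
    LDl S Lp n a ≤ Filter.liminf (fun k => LDl S Lp n (a_ k)) F := by
  rw [LDl]
  refine iSup_le fun r => iSup_le fun φ => iSup_le fun hφ => iSup_le fun ψ =>
    iSup_le fun hψ => iSup_le fun hne => ?_
  have hent : ∀ (P Q : Fin n × Fin r),
      Filter.Tendsto (fun k => (pairing φ (a_ k) - pairing ψ (a_ k)) P Q) F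
        (nhds ((pairing φ a - pairing ψ a) P Q)) := by
    intro P Q
    have h1 := hconv (entryFun φ P.2 Q.2) (bounded_entryFun S hφ P.2 Q.2) P.1 Q.1
    have h2 := hconv (entryFun ψ P.2 Q.2) (bounded_entryFun S hψ P.2 Q.2) P.1 Q.1
    simpa [pairing, entryFun, Matrix.sub_apply] using h1.sub h2
  have hmat : Filter.Tendsto (fun k => pairing φ (a_ k) - pairing ψ (a_ k)) F
      (nhds (pairing φ a - pairing ψ a)) := by
    apply tendsto_pi_nhds.mpr
    intro P
    apply tendsto_pi_nhds.mpr
    intro Q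
    exact hent P Q
  have hop : Filter.Tendsto (fun k => opNorm (pairing φ (a_ k) - pairing ψ (a_ k))) F
      (nhds (opNorm (pairing φ a - pairing ψ a))) :=
    (continuous_opNorm.tendsto _).comp hmat
  have hoe : Filter.Tendsto
      (fun k => ENNReal.ofReal (opNorm (pairing φ (a_ k) - pairing ψ (a_ k)))) F
      (nhds (ENNReal.ofReal (opNorm (pairing φ a - pairing ψ a)))) :=
    ENNReal.tendsto_ofReal hop
  by_cases hx : ENNReal.ofReal (opNorm (pairing φ a - pairing ψ a)) = 0
  · rw [hx, ENNReal.zero_div]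
    exact zero_le
  · have htend : Filter.Tendsto
        (fun k => ENNReal.ofReal (opNorm (pairing φ (a_ k) - pairing ψ (a_ k))) / Dl S Lp φ ψ) F
        (nhds (ENNReal.ofReal (opNorm (pairing φ a - pairing ψ a)) / Dl S Lp φ ψ)) := by
      simp only [div_eq_mul_inv]
      exact ENNReal.Tendsto.mul_const hoe (Or.inl hx)
    have hle : ∀ k, ENNReal.ofReal (opNorm (pairing φ (a_ k) - pairing ψ (a_ k))) / Dl S Lp φ ψ
        ≤ LDl S Lp n (a_ k) := fun k =>
      le_iSup_of_le r <| le_iSup_of_le φ <| le_iSup_of_le hφ <| le_iSup_of_le ψ <|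
        le_iSup_of_le hψ <| le_iSup_of_le hne le_rfl
    calc ENNReal.ofReal (opNorm (pairing φ a - pairing ψ a)) / Dl S Lp φ ψ
        = Filter.liminf
            (fun k => ENNReal.ofReal (opNorm (pairing φ (a_ k) - pairing ψ (a_ k))) / Dl S Lp φ ψ)
            F := (htend.liminf_eq).symm
      _ ≤ Filter.liminf (fun k => LDl S Lp n (a_ k)) F :=
          Filter.liminf_le_liminf (Filter.Eventually.of_forall hle)
end
end
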